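/- Let 0 < m < n < 2m, let S ⊆ Σ^m ∪ Σ^n with S* co-finite, and let τ be a word not in S* with |τ| = n + jm for some j ≥ 0. Then for every i with 1 ≤ i < m, the language (τ Σ^m)^{i−1} τ is disjoint from S*. -/

import Mathlib

open Computability

namespace TPOaux
variable {α : Type}

theorem append_mem_kstar {S : Language α} {x y : List α}
    (hx : x ∈ S∗) (hy : y ∈ S∗) : x ++ y ∈ S∗ := by
  obtain ⟨L1, rfl, h1⟩ := Language.mem_kstar.mp hx
  obtain ⟨L2, rfl, h2⟩ := Language.mem_kstar.mp hy
  rw [← List.flatten_append]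
  exact Language.join_mem_kstar (by
    intro y hy
    rcases List.mem_append.mp hy with h | h
    exacts [h1 _ h, h2 _ h])

theorem single_mem_kstar {S : Language α} {x : List α} (hx : x ∈ S) : x ∈ S∗ :=
  Language.mem_kstar.mpr ⟨[x], by simp, by simpa⟩

theorem length_of_mem_kstar {S : Language α} {m n : ℕ}
    (hS : ∀ w ∈ S, w.length = m ∨ w.length = n) {x : List α} (hx : x ∈ S∗) :
    ∃ a b : ℕ, x.length = a * m + b * n := by
  obtain ⟨L, rfl, hmem⟩ := Language.mem_kstar.mp hx
  clear hx
  induction L with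
  | nil => exact ⟨0, 0, by simp⟩
  | cons y L ih =>
    obtain ⟨a, b, hab⟩ := ih (fun z hz => hmem z (by simp [hz]))
    rcases hS y (hmem y (by simp)) with h | h
    · exact ⟨a + 1, b, by simp only [List.flatten_cons, List.length_append, hab, h]; ring⟩
    · exact ⟨a, b + 1, by simp only [List.flatten_cons, List.length_append, hab, h]; ring⟩

def xlen (bs : List (List α)) (t : ℕ) : ℕ := ((bs.take t).map List.length).sum

def bcnt (n : ℕ) (bs : List (List α)) (t : ℕ) : ℕ :=
  (bs.take t).countP (fun b => b.length == n)

theorem xlen_zero (bs : List (List α)) : xlen bs 0 = 0 := by simp [xlen]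

theorem bcnt_zero (n : ℕ) (bs : List (List α)) : bcnt n bs 0 = 0 := by simp [bcnt]

theorem take_succ_concat (bs : List (List α)) (t : ℕ) (h : t < bs.length) :
    bs.take (t + 1) = bs.take t ++ [bs[t]] := by
  rw [List.take_succ, List.getElem?_eq_getElem h]
  rfl

theorem xlen_succ (bs : List (List α)) (t : ℕ) (h : t < bs.length) :
    xlen bs (t + 1) = xlen bs t + bs[t].length := by
  unfold xlen
  rw [take_succ_concat bs t h, List.map_append, List.sum_append]
  simp

theorem bcnt_succ (n : ℕ) (bs : List (List α)) (t : ℕ) (h : t < bs.length) :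
    bcnt n bs (t + 1) = bcnt n bs t + (if bs[t].length = n then 1 else 0) := by
  unfold bcnt
  rw [take_succ_concat bs t h, List.countP_append]
  congr 1
  by_cases hb : bs[t].length = n <;> simp [hb]

theorem xlen_total (bs : List (List α)) : xlen bs bs.length = bs.flatten.length := by
  simp [xlen, List.length_flatten]

theorem xlen_le (bs : List (List α)) (t : ℕ) :
    xlen bs t + ((bs.drop t).map List.length).sum = bs.flatten.length := by
  conv_rhs => rw [← List.take_append_drop t bs]
  simp [xlen, List.length_flatten]

theorem flatten_drop_xlen (bs : List (List α)) (t : ℕ) (h : t < bs.length) :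
    bs.flatten.drop (xlen bs t) = bs[t] ++ (bs.drop (t + 1)).flatten := by
  have hx : xlen bs t = (bs.take t).flatten.length := by simp [xlen, List.length_flatten]
  have h0 : bs.flatten = (bs.take t).flatten ++ (bs.drop t).flatten := by
    rw [← List.flatten_append, List.take_append_drop]
  rw [h0, hx, List.drop_left, List.drop_eq_getElem_cons h, List.flatten_cons]

theorem sum_two_lengths {m n : ℕ} (hmn : m < n) (ls : List (List α))
    (h : ∀ b ∈ ls, b.length = m ∨ b.length = n) :
    (ls.map List.length).sum = m * ls.length + (n - m) * ls.countP (fun b => b.length == n) := by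
  induction ls with
  | nil => simp
  | cons b ls ih =>
    have hrec := ih (fun z hz => h z (by simp [hz]))
    simp only [List.map_cons, List.sum_cons, List.countP_cons, List.length_cons, hrec,
      Nat.mul_succ]
    rcases h b (by simp) with hb | hb
    · have hfalse : (b.length == n) = false := beq_eq_false_iff_ne.mpr (by omega)
      rw [hfalse]
      simp only [if_false, Bool.false_eq_true, Nat.add_zero]
      omega
    · have htrue : (b.length == n) = true := by simp [hb]
      rw [htrue]
      simp only [if_true]
      rw [Nat.mul_succ]
      omega

theorem xlen_sum {m n : ℕ} (hmn : m < n) (bs : List (List α))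
    (hS' : ∀ b ∈ bs, b.length = m ∨ b.length = n) (t : ℕ) (h : t ≤ bs.length) :
    xlen bs t = m * t + (n - m) * bcnt n bs t := by
  have := sum_two_lengths hmn (bs.take t) (fun z hz => hS' z (List.take_subset t bs hz))
  unfold xlen bcnt
  rw [this, List.length_take, Nat.min_eq_left h]

theorem tauWord_length (τ : List α) (m : ℕ) (ls : List (List α)) (h : ∀ v ∈ ls, v.length = m) :
    ((ls.map (τ ++ ·)).flatten ++ τ).length = ls.length * (τ.length + m) + τ.length := by
  induction ls with
  | nil => simp
  | cons v ls ih =>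
    have hrec := ih (fun z hz => h z (by simp [hz]))
    have hv := h v (by simp)
    simp only [List.map_cons, List.flatten_cons, List.length_append, List.length_cons] at hrec ⊢
    rw [Nat.succ_mul]
    omega

theorem tauWord_drop (τ : List α) (m : ℕ) (ls : List (List α)) (h : ∀ v ∈ ls, v.length = m)
    (a : ℕ) (ha : a ≤ ls.length) :
    ((ls.map (τ ++ ·)).flatten ++ τ).drop (a * (τ.length + m)) =
      (((ls.drop a).map (τ ++ ·)).flatten ++ τ) := by
  induction ls generalizing a with
  | nil =>
    have : a = 0 := by simpa using ha
    subst this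
    simp
  | cons v ls ih =>
    cases a with
    | zero => simp
    | succ a =>
      have hv := h v (by simp)
      have h1 : ((v :: ls).map (τ ++ ·)).flatten ++ τ =
          (τ ++ v) ++ ((ls.map (τ ++ ·)).flatten ++ τ) := by
        simp [List.append_assoc]
      rw [h1]
      have h2 : (a + 1) * (τ.length + m) = (τ ++ v).length + a * (τ.length + m) := by
        simp [hv]
        ring
      rw [h2, List.drop_length_add_append]
      exact ih (fun z hz => h z (by simp [hz])) a (by simpa using ha)

theorem tauWord_head (τ : List α) (ls : List (List α)) :
    ∃ rest, (ls.map (τ ++ ·)).flatten ++ τ = τ ++ rest := by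
  cases ls with
  | nil => exact ⟨[], by simp⟩
  | cons v ls => exact ⟨v ++ ((ls.map (τ ++ ·)).flatten ++ τ), by simp⟩

end TPOaux

/-- Let `0 < m < n < 2m`, `S ⊆ Σ^m ∪ Σ^n` with `S∗` co-finite, and let `τ`
be a word not in `S∗` with `|τ| = n + j·m` for some `j ≥ 0`. Then for `1 ≤ i < m`, the
language `(τ Σ^m)^{i−1} τ` is disjoint from `S∗`. -/
theorem tau_powers_omitted {α : Type} [Fintype α] (m n : ℕ)
    (hm : 0 < m) (hmn : m < n) (hn2m : n < 2 * m)
    (S : Language α) (hS : ∀ w ∈ S, w.length = m ∨ w.length = n)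
    (hcof : Set.Finite ((S∗ : Language α)ᶜ))
    (τ : List α) (hτ : τ ∉ (S∗ : Language α)) (j : ℕ) (hlen : τ.length = n + j * m) :
    ∀ i : ℕ, 1 ≤ i → i < m →
      ∀ u : Fin (i - 1) → List α, (∀ a, (u a).length = m) →
        (List.ofFn (fun a => τ ++ u a)).flatten ++ τ ∉ (S∗ : Language α) := by
  intro i hi1 him u hu hw
  have hm2 : 2 ≤ m := by omega
  -- alphabet is nonempty
  rcases isEmpty_or_nonempty α with hα | hα
  · cases τ with
    | nil => simp at hlen; omega
    | cons a _ => exact (hα.false a).elim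
  obtain ⟨c⟩ := hα
  classical
  obtain ⟨K, hiK⟩ : ∃ K, i = K + 1 := ⟨i - 1, by omega⟩
  set r : ℕ := n - m with hr
  have hrn : n = m + r := by omega
  have hr1 : 1 ≤ r := by omega
  set M : ℕ := n + (j + 1) * m with hM
  have hMτ : τ.length + m = M := by rw [hlen, hM]; ring
  have hjm1 : m ≤ (j + 1) * m := Nat.le_mul_of_pos_left m (by omega)
  have hM0 : 0 < M := by omega
  have hnM : n < M := by omega
  have hτM : τ.length < M := by omega
  have hM2 : M = r + (j + 2) * m := by rw [hM, hrn]; ring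
  -- gcd m n = 1
  have hgcd : Nat.gcd m n = 1 := by
    by_contra hg
    have hg0 : 0 < Nat.gcd m n := Nat.gcd_pos_of_pos_left n hm
    have hg2 : 2 ≤ Nat.gcd m n := by omega
    have hdm : Nat.gcd m n ∣ m := Nat.gcd_dvd_left m n
    have hdn : Nat.gcd m n ∣ n := Nat.gcd_dvd_right m n
    have hinf : ((S∗ : Language α)ᶜ).Infinite := by
      apply Set.infinite_of_injective_forall_mem
        (f := fun k : ℕ => List.replicate (k * Nat.gcd m n + 1) c)
      · intro k1 k2 hk
        have h1 := congrArg List.length hk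
        simp only [List.length_replicate] at h1
        exact Nat.eq_of_mul_eq_mul_right hg0 (by omega)
      · intro k hks
        obtain ⟨a, b, hab⟩ := TPOaux.length_of_mem_kstar hS hks
        simp only [List.length_replicate] at hab
        have h1 : Nat.gcd m n ∣ a * m + b * n := dvd_add (hdm.mul_left a) (hdn.mul_left b)
        rw [← hab] at h1
        have h2 : Nat.gcd m n ∣ k * Nat.gcd m n := Dvd.intro_left k rfl
        have h3 : Nat.gcd m n ∣ 1 := (Nat.dvd_add_right h2).mp h1
        have h4 : Nat.gcd m n = 1 := Nat.dvd_one.mp h3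
        omega
    exact hinf hcof
  -- longest word outside S∗
  obtain ⟨ω, hωc, hωmax⟩ :=
    Set.exists_max_image ((S∗ : Language α)ᶜ) List.length hcof ⟨τ, hτ⟩
  have hlong : ∀ z : List α, ω.length < z.length → z ∈ S∗ := by
    intro z hz
    by_contra hzc
    exact absurd (hωmax z hzc) (by omega)
  -- every word of length m is in S
  have hSm : ∀ v : List α, v.length = m → v ∈ S := by
    intro v hv
    have hzlen : (ω ++ (List.replicate r c ++ v)).length = ω.length + r + m := by
      simp [hv]; omega
    have hz : ω ++ (List.replicate r c ++ v) ∈ S∗ := hlong _ (by rw [hzlen]; omega)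
    obtain ⟨Lz, hLzeq, hLmem⟩ := Language.mem_kstar.mp hz
    rcases Lz.eq_nil_or_concat with rfl | ⟨l₂, b, rfl⟩
    all_goals try rw [List.concat_eq_append] at hLzeq
    · rw [List.flatten_nil] at hLzeq
      have := congrArg List.length hLzeq
      simp [hv] at this
      omega
    · have hb : b ∈ S := hLmem b (by simp)
      have hflat : l₂.flatten ++ b = ω ++ (List.replicate r c ++ v) := by
        rw [hLzeq, List.flatten_append]
        simp
      have hl2len : l₂.flatten.length + b.length = ω.length + r + m := by
        have h9 := congrArg List.length hflat
        simp only [List.length_append, List.length_replicate, hv] at h9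
        omega
      rcases hS b hb with hbm | hbn
      · -- the last block is v itself
        have hlf : l₂.flatten.length = ω.length + r := by omega
        have hbv : b = v := by
          have h1 : (l₂.flatten ++ b).drop l₂.flatten.length = b := List.drop_left ..
          rw [hflat, hlf, ← List.append_assoc] at h1
          have h2 : (ω ++ List.replicate r c).length = ω.length + r := by simp
          rw [← h2, List.drop_left] at h1
          exact h1.symm
        rwa [hbv] at hb
      · -- else ω ∈ S∗, contradiction
        exfalso
        have hlf : l₂.flatten.length = ω.length := by omega
        have h1 : (l₂.flatten ++ b).take l₂.flatten.length = l₂.flatten := List.take_left ..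
        rw [hflat, hlf, List.take_left] at h1
        exact hωc (h1 ▸ Language.join_mem_kstar (fun y hy => hLmem y (by simp [hy])))
  -- every word whose length is a multiple of m is in S∗
  have hdvdS : ∀ (k : ℕ) (y : List α), y.length = m * k → y ∈ S∗ := by
    intro k
    induction k with
    | zero =>
      intro y hy
      have : y = [] := List.eq_nil_of_length_eq_zero (by omega)
      rw [this]; exact Language.nil_mem_kstar S
    | succ k ih =>
      intro y hy
      have hmy : m ≤ y.length := by rw [hy, Nat.mul_succ]; omega
      have h1 : y.take m ∈ S := hSm _ (by rw [List.length_take]; omega)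
      have h2 : y.drop m ∈ S∗ := ih _ (by rw [List.length_drop, hy, Nat.mul_succ]; omega)
      have h3 : y = y.take m ++ y.drop m := (List.take_append_drop m y).symm
      rw [h3]
      exact TPOaux.append_mem_kstar (TPOaux.single_mem_kstar h1) h2
  -- aligned n-windows of τ are not in S
  have hwin : ∀ d : ℕ, d % m = 0 → d + n ≤ τ.length → (τ.drop d).take n ∈ S → False := by
    intro d hdm hdn hbS
    apply hτ
    have hdvd : m ∣ d := Nat.dvd_of_mod_eq_zero hdm
    have hdq : m * (d / m) = d := Nat.mul_div_cancel' hdvd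
    have hqj : d / m ≤ j := by
      have hjm : d ≤ j * m := by rw [hlen] at hdn; omega
      have h5 : m * (d / m) ≤ m * j := by rw [hdq, mul_comm m j]; exact hjm
      exact Nat.le_of_mul_le_mul_left h5 (by omega)
    have h1 : τ.take d ∈ S∗ := by
      apply hdvdS (d / m)
      rw [List.length_take, Nat.min_eq_left (by omega)]
      omega
    have h2 : (τ.drop d).take n ∈ S∗ := TPOaux.single_mem_kstar hbS
    have h3 : (τ.drop d).drop n ∈ S∗ := by
      apply hdvdS (j - d / m)
      rw [List.length_drop, List.length_drop, hlen]
      have hexp : m * (j - d / m) + m * (d / m) = m * j := by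
        rw [← Nat.mul_add]
        congr 1
        omega
      have hjm' : j * m = m * j := mul_comm j m
      omega
    have h4 := TPOaux.append_mem_kstar h1 (TPOaux.append_mem_kstar h2 h3)
    rwa [List.take_append_drop, List.take_append_drop] at h4
  -- convert the word to list form
  have hwW : (List.ofFn fun a => τ ++ u a) = (List.ofFn u).map (τ ++ ·) :=
    (List.map_ofFn (f := u) (g := (τ ++ ·))).symm
  rw [hwW] at hw
  have hlmem : ∀ v ∈ List.ofFn u, v.length = m := by
    intro v hv
    obtain ⟨a, ha⟩ := List.mem_ofFn.mp hv
    rw [← ha]; exact hu a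
  have hllen : (List.ofFn u).length = K := by rw [List.length_ofFn]; omega
  -- factorization
  obtain ⟨bs, hbseq, hbmem⟩ := Language.mem_kstar.mp hw
  have hblen : ∀ b ∈ bs, b.length = m ∨ b.length = n := fun b hb => hS b (hbmem b hb)
  have hWlen : bs.flatten.length = K * M + τ.length := by
    rw [← hbseq, TPOaux.tauWord_length τ m (List.ofFn u) hlmem, hllen, hMτ]
  have hxle : ∀ t, TPOaux.xlen bs t ≤ K * M + τ.length := by
    intro t
    have := TPOaux.xlen_le bs t
    rw [hWlen] at this
    omega
  have hiM : K * M + M = i * M := by rw [hiK]; ring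
  -- the forbidden configuration
  have hforb : ∀ (t : ℕ) (ht : t < bs.length), bs[t].length = n →
      (TPOaux.xlen bs t % M) % m = 0 → TPOaux.xlen bs t % M + n ≤ τ.length → False := by
    intro t ht hbn hdm0 hdn0
    have hda : M * (TPOaux.xlen bs t / M) + TPOaux.xlen bs t % M = TPOaux.xlen bs t :=
      Nat.div_add_mod _ M
    have hx_lt : TPOaux.xlen bs t < i * M := by
      have h1 := TPOaux.xlen_succ bs t ht
      have h2 := hxle (t + 1)
      rw [hbn] at h1
      omega
    have hai : TPOaux.xlen bs t / M ≤ K := by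
      have : TPOaux.xlen bs t / M < i := (Nat.div_lt_iff_lt_mul hM0).mpr hx_lt
      omega
    obtain ⟨rest, hrest⟩ := TPOaux.tauWord_head τ ((List.ofFn u).drop (TPOaux.xlen bs t / M))
    have hdropW : bs.flatten.drop (TPOaux.xlen bs t / M * M) = τ ++ rest := by
      have h5 := TPOaux.tauWord_drop τ m (List.ofFn u) hlmem (TPOaux.xlen bs t / M)
        (by rw [hllen]; exact hai)
      rw [hMτ, hrest] at h5
      rw [← hbseq, h5]
    have hblock : bs.flatten.drop (TPOaux.xlen bs t) = bs[t] ++ (bs.drop (t + 1)).flatten :=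
      TPOaux.flatten_drop_xlen bs t ht
    have hdτ : TPOaux.xlen bs t % M ≤ τ.length := by omega
    have hWdropx : bs.flatten.drop (TPOaux.xlen bs t) =
        τ.drop (TPOaux.xlen bs t % M) ++ rest := by
      have h1 : (bs.flatten.drop (TPOaux.xlen bs t / M * M)).drop (TPOaux.xlen bs t % M) =
          bs.flatten.drop (TPOaux.xlen bs t) := by
        rw [List.drop_drop]
        congr 1
        rw [mul_comm]
        omega
      rw [← h1, hdropW, List.drop_append_of_le_length hdτ]
    have hcomb : bs[t] ++ (bs.drop (t + 1)).flatten =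
        τ.drop (TPOaux.xlen bs t % M) ++ rest := by
      rw [← hblock, hWdropx]
    have htkb : bs[t].take n = bs[t] := by rw [← hbn]; exact List.take_length
    have htake : bs[t] = (τ.drop (TPOaux.xlen bs t % M)).take n := by
      have h1 := congrArg (List.take n) hcomb
      rw [List.take_append_of_le_length (le_of_eq hbn.symm),
        List.take_append_of_le_length (by rw [List.length_drop]; omega), htkb] at h1
      exact h1
    exact hwin _ hdm0 hdn0 (htake ▸ hbmem _ (List.getElem_mem ht))
  -- the invariant
  have INV : ∀ t, t ≤ bs.length → ∃ s, s ≤ TPOaux.xlen bs t / M ∧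
      Nat.ModEq m (TPOaux.bcnt n bs t + s) (TPOaux.xlen bs t / M) := by
    intro t
    induction t with
    | zero =>
      intro _
      refine ⟨0, by simp [TPOaux.xlen_zero], ?_⟩
      simp only [TPOaux.xlen_zero, TPOaux.bcnt_zero, Nat.zero_div, Nat.add_zero]
      exact Nat.ModEq.refl 0
    | succ t ih =>
      intro ht
      obtain ⟨s, hs, hmod⟩ := ih (by omega)
      have htlt : t < bs.length := by omega
      have hxs := TPOaux.xlen_succ bs t htlt
      have hbs := TPOaux.bcnt_succ n bs t htlt
      set x := TPOaux.xlen bs t with hxd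
      set β := TPOaux.bcnt n bs t with hβd
      set a := x / M with had
      set d := x % M with hdd
      have hda : M * a + d = x := Nat.div_add_mod x M
      have hdM : d < M := Nat.mod_lt x hM0
      rcases hblen bs[t] (List.getElem_mem htlt) with hbm | hbn
      · -- m-block
        have hx1 : TPOaux.xlen bs (t + 1) = x + m := by rw [hxs, hbm]
        have hb1 : TPOaux.bcnt n bs (t + 1) = β := by
          rw [hbs, if_neg (by omega), Nat.add_zero]
        have hdiv : (x + m) / M = a + (d + m) / M := by
          rw [← hda, add_assoc, Nat.mul_add_div hM0]
        have he : (d + m) / M ≤ 1 :=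
          Nat.lt_succ_iff.mp ((Nat.div_lt_iff_lt_mul hM0).mpr (show d + m < 2 * M by omega))
        refine ⟨s + (d + m) / M, ?_, ?_⟩
        · rw [hx1, hdiv]; exact Nat.add_le_add_right hs _
        · rw [hx1, hb1, hdiv, ← add_assoc]
          exact hmod.add_right _
      · -- n-block
        have hx1 : TPOaux.xlen bs (t + 1) = x + n := by rw [hxs, hbn]
        have hb1 : TPOaux.bcnt n bs (t + 1) = β + 1 := by rw [hbs, if_pos hbn]
        have hdiv : (x + n) / M = a + (d + n) / M := by
          rw [← hda, add_assoc, Nat.mul_add_div hM0]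
        have he : (d + n) / M ≤ 1 :=
          Nat.lt_succ_iff.mp ((Nat.div_lt_iff_lt_mul hM0).mpr (show d + n < 2 * M by omega))
        by_cases hwrap : (d + n) / M = 1
        · refine ⟨s, ?_, ?_⟩
          · rw [hx1, hdiv, hwrap]; exact Nat.le_succ_of_le hs
          · rw [hx1, hb1, hdiv, hwrap]
            have h1 : β + s + 1 ≡ a + 1 [MOD m] := hmod.add_right 1
            have h2 : β + 1 + s = β + s + 1 := by ring
            rw [h2]
            exact h1
        · have he0 : (d + n) / M = 0 := by
            rcases Nat.le_one_iff_eq_zero_or_eq_one.mp he with h | h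
            · exact h
            · exact absurd h hwrap
          have hnw : d + n < M := by
            by_contra hcon
            push_neg at hcon
            have := (Nat.one_le_div_iff hM0).mpr hcon
            omega
          rcases Nat.eq_zero_or_pos s with hs0 | hspos
          · -- contradiction with hforb
            exfalso
            subst hs0
            have hmodβ : Nat.ModEq m β a := by simpa using hmod
            have hsum : x = m * t + r * β := by
              have h6 := TPOaux.xlen_sum hmn bs hblen t (by omega)
              rw [← hxd, ← hβd, ← hr] at h6
              exact h6
            have hkey : d % m = 0 := by
              have hMa : M * a = r * a + m * ((j + 2) * a) := by rw [hM2]; ring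
              have heq : m * t + r * β = r * a + m * ((j + 2) * a) + d := by omega
              have h1 : (r * β) % m = (r * a) % m := hmodβ.mul_left r
              have h2 : (m * t + r * β) % m = (r * β) % m := by
                rw [add_comm]
                exact Nat.add_mul_mod_self_left (r * β) m t
              have h3 : (r * a + m * ((j + 2) * a) + d) % m = (r * a + d) % m := by
                have h7 : r * a + m * ((j + 2) * a) + d = (r * a + d) + m * ((j + 2) * a) := by
                  ring
                rw [h7, Nat.add_mul_mod_self_left]
              have h4 : (r * a) % m = (r * a + d) % m := by
                calc (r * a) % m = (r * β) % m := h1.symm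
                  _ = (m * t + r * β) % m := h2.symm
                  _ = (r * a + m * ((j + 2) * a) + d) % m := by rw [heq]
                  _ = (r * a + d) % m := h3
              have h5 : Nat.ModEq m (r * a + 0) (r * a + d) := by
                show (r * a + 0) % m = (r * a + d) % m
                rw [Nat.add_zero]
                exact h4
              have h6 : Nat.ModEq m 0 d := Nat.ModEq.add_left_cancel' (r * a) h5
              have h8 : d % m = 0 % m := h6.symm
              simpa using h8
            have hdjm : d + n ≤ τ.length := by
              rw [hlen]
              have h7 : d < (j + 1) * m := by omega
              obtain ⟨q, hq⟩ := Nat.dvd_of_mod_eq_zero hkey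
              have hq1 : q < j + 1 := by
                by_contra hq2
                push_neg at hq2
                have h9 : (j + 1) * m ≤ m * q := by
                  calc (j + 1) * m = m * (j + 1) := mul_comm ..
                    _ ≤ m * q := Nat.mul_le_mul_left m hq2
                omega
              have h10 : m * q ≤ m * j := Nat.mul_le_mul_left m (by omega)
              have h11 : j * m = m * j := mul_comm ..
              omega
            exact hforb t htlt hbn hkey hdjm
          · refine ⟨s - 1, ?_, ?_⟩
            · rw [hx1, hdiv, he0, Nat.add_zero]
              exact le_trans (Nat.sub_le s 1) hs
            · rw [hx1, hb1, hdiv, he0]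
              have hre : β + 1 + (s - 1) = β + s := by omega
              rw [hre, Nat.add_zero]
              exact hmod
  -- final contradiction
  obtain ⟨s, hs, hmod⟩ := INV bs.length le_rfl
  have hxtot : TPOaux.xlen bs bs.length = K * M + τ.length := by
    rw [TPOaux.xlen_total, hWlen]
  have haend : (K * M + τ.length) / M = K := by
    have h1 : K * M + τ.length = M * K + τ.length := by ring
    rw [h1, Nat.mul_add_div hM0, Nat.div_eq_of_lt hτM, Nat.add_zero]
  rw [hxtot, haend] at hs hmod
  have hsum := TPOaux.xlen_sum hmn bs hblen bs.length le_rfl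
  rw [hxtot, ← hr] at hsum
  have hid : K * M + τ.length = r * (K + 1) + m * (K * (j + 2) + j + 1) := by
    rw [hM, hlen, hrn]; ring
  have hBmod : Nat.ModEq m (r * TPOaux.bcnt n bs bs.length) (r * (K + 1)) := by
    show (r * TPOaux.bcnt n bs bs.length) % m = (r * (K + 1)) % m
    calc (r * TPOaux.bcnt n bs bs.length) % m
        = (r * TPOaux.bcnt n bs bs.length + m * bs.length) % m := by
          rw [Nat.add_mul_mod_self_left]
      _ = (r * (K + 1) + m * (K * (j + 2) + j + 1)) % m := by
          rw [show r * TPOaux.bcnt n bs bs.length + m * bs.length = K * M + τ.length by omega,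
            hid]
      _ = (r * (K + 1)) % m := by rw [Nat.add_mul_mod_self_left]
  have hcop : Nat.Coprime m r := by
    have h1 : Nat.Coprime m n := hgcd
    rw [hrn, Nat.add_comm] at h1
    exact Nat.coprime_add_self_right.mp h1
  have hBK : Nat.ModEq m (TPOaux.bcnt n bs bs.length) (K + 1) :=
    Nat.ModEq.cancel_left_of_coprime hcop hBmod
  have h1 : Nat.ModEq m ((K + 1) + s) (TPOaux.bcnt n bs bs.length + s) := hBK.symm.add_right s
  have h2 : Nat.ModEq m ((K + 1) + s) K := h1.trans hmod
  have h3 : Nat.ModEq m (K + (1 + s)) (K + 0) := by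
    have e1 : (K + 1) + s = K + (1 + s) := by ring
    rw [e1] at h2
    simpa using h2
  have h4 : Nat.ModEq m (1 + s) 0 := Nat.ModEq.add_left_cancel' K h3
  have h5 : m ∣ 1 + s := (Nat.modEq_zero_iff_dvd).mp h4
  have h6 : m ≤ 1 + s := Nat.le_of_dvd (by omega) h5
  omega
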